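/- The convolution of two nonnegative, spherically symmetric, radially non-increasing, square-integrable functions on ℝ^k is again a spherically symmetric, radially non-increasing function. Specifically: if ψ₁(x) = g₁(|x|) and ψ₂(x) = g₂(|x|) with g₁, g₂ nonnegative and non-increasing, and ψ₁, ψ₂ ∈ L²(ℝ^k), then (ψ₁ * ψ₂)(x) depends only on |x| and is a non-increasing function of |x|. -/

import Mathlib

open MeasureTheory
open scoped RealInnerProductSpace

private lemma memL2_mul_integrable {α : Type*} [MeasurableSpace α] {μ : Measure α}
    {f g : α → ℝ} (hf : MemLp f 2 μ) (hg : MemLp g 2 μ) :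
    Integrable (fun y => f y * g y) μ := by
  have hint : Integrable (fun y => (f y ^ 2 + g y ^ 2) / 2) μ :=
    (hf.integrable_sq.add hg.integrable_sq).div_const 2
  refine hint.mono' (hf.aestronglyMeasurable.mul hg.aestronglyMeasurable) ?_
  filter_upwards with y
  have := sq_nonneg (|f y| - |g y|)
  rw [Real.norm_eq_abs, abs_mul]
  nlinarith [sq_abs (f y), sq_abs (g y)]

private lemma conv_rot {k : ℕ} (g₁ g₂ : ℝ → ℝ) {x x' : EuclideanSpace ℝ (Fin k)}
    (h : ‖x‖ = ‖x'‖) :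
    (∫ y, g₁ ‖y‖ * g₂ ‖x - y‖ ∂volume) = ∫ y, g₁ ‖y‖ * g₂ ‖x' - y‖ ∂volume := by
  rcases eq_or_ne x x' with rfl | hne
  · rfl
  · set O := Submodule.reflection (ℝ ∙ (x - x'))ᗮ with hO
    have hx : O x = x' := Submodule.reflection_sub h
    calc (∫ y, g₁ ‖y‖ * g₂ ‖x - y‖ ∂volume)
        = ∫ y, (fun z => g₁ ‖z‖ * g₂ ‖x' - z‖) (O y) ∂volume := by
          congr 1; ext y
          simp only
          rw [O.norm_map, ← hx, ← map_sub, O.norm_map]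
      _ = ∫ y, g₁ ‖y‖ * g₂ ‖x' - y‖ ∂volume :=
          O.measurePreserving.integral_comp O.toHomeomorph.measurableEmbedding
            (fun z => g₁ ‖z‖ * g₂ ‖x' - z‖)

set_option maxHeartbeats 2000000 in
theorem convolution_radial_antitone {k : ℕ}
    (g₁ g₂ : ℝ → ℝ)
    (h₁nn : ∀ r, 0 ≤ g₁ r) (h₂nn : ∀ r, 0 ≤ g₂ r)
    (h₁mono : AntitoneOn g₁ (Set.Ici 0)) (h₂mono : AntitoneOn g₂ (Set.Ici 0))
    (h₁L2 : MemLp (fun x : EuclideanSpace ℝ (Fin k) => g₁ ‖x‖) 2 volume)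
    (h₂L2 : MemLp (fun x : EuclideanSpace ℝ (Fin k) => g₂ ‖x‖) 2 volume) :
    ∃ h : ℝ → ℝ, AntitoneOn h (Set.Ici 0) ∧
      ∀ x : EuclideanSpace ℝ (Fin k),
        (∫ y : EuclideanSpace ℝ (Fin k), g₁ ‖y‖ * g₂ ‖x - y‖ ∂volume) = h ‖x‖ := by
  rcases Nat.eq_zero_or_pos k with hk | hk
  · subst hk
    refine ⟨fun _ => ∫ y : EuclideanSpace ℝ (Fin 0),
        g₁ ‖y‖ * g₂ ‖(0 : EuclideanSpace ℝ (Fin 0)) - y‖ ∂volume,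
      fun a _ b _ _ => le_rfl, fun x => ?_⟩
    have hx : x = 0 := Subsingleton.elim x 0
    rw [hx]
  · set e : EuclideanSpace ℝ (Fin k) := EuclideanSpace.single (⟨0, hk⟩ : Fin k) (1 : ℝ)
      with he_def
    have he : ‖e‖ = 1 := by rw [he_def, EuclideanSpace.norm_single, norm_one]
    set c : EuclideanSpace ℝ (Fin k) → ℝ :=
      fun x => ∫ y, g₁ ‖y‖ * g₂ ‖x - y‖ ∂volume with hc
    refine ⟨fun r => c (r • e), ?_, fun x => ?_⟩
    · -- antitone
      intro d₁ hd₁ d₂ hd₂ hle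
      rcases eq_or_lt_of_le hle with rfl | hlt
      · exact le_rfl
      have hd₁0 : (0 : ℝ) ≤ d₁ := hd₁
      have hd₂0 : (0 : ℝ) ≤ d₂ := hd₂
      simp only
      set s : ℝ := d₁ + d₂ with hs
      have hs0 : 0 < s := by
        have : 0 < d₂ := lt_of_le_of_lt hd₁0 hlt
        positivity
      set φ : EuclideanSpace ℝ (Fin k) → ℝ := fun y => g₁ ‖y‖ with hφ_def
      set ψ : EuclideanSpace ℝ (Fin k) → ℝ := fun y => g₁ ‖s • e - y‖ with hψ_def
      set a : EuclideanSpace ℝ (Fin k) → ℝ := fun y => g₂ ‖d₁ • e - y‖ with ha_def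
      set b : EuclideanSpace ℝ (Fin k) → ℝ := fun y => g₂ ‖d₂ • e - y‖ with hb_def
      have hφ2 : MemLp φ 2 volume := h₁L2
      have hψ2 : MemLp ψ 2 volume :=
        h₁L2.comp_measurePreserving (Measure.measurePreserving_sub_left volume (s • e))
      have ha2 : MemLp a 2 volume :=
        h₂L2.comp_measurePreserving (Measure.measurePreserving_sub_left volume (d₁ • e))
      have hb2 : MemLp b 2 volume :=
        h₂L2.comp_measurePreserving (Measure.measurePreserving_sub_left volume (d₂ • e))
      have iφa := memL2_mul_integrable hφ2 ha2
      have iφb := memL2_mul_integrable hφ2 hb2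
      have iψa := memL2_mul_integrable hψ2 ha2
      have iψb := memL2_mul_integrable hψ2 hb2
      have hcd₁ : c (d₁ • e) = ∫ y, φ y * a y ∂volume := rfl
      have hcd₂ : c (d₂ • e) = ∫ y, φ y * b y ∂volume := rfl
      -- reflection identities
      have key₁ : (∫ y, ψ y * b y ∂volume) = c (d₁ • e) := by
        rw [hcd₁]
        have h0 := integral_sub_left_eq_self
          (fun y : EuclideanSpace ℝ (Fin k) => g₁ ‖y‖ * g₂ ‖d₁ • e - y‖) volume (s • e)
        rw [← h0]
        congr 1; ext y
        have h1 : d₁ • e - (s • e - y) = -(d₂ • e - y) := by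
          rw [hs]; module
        simp only [hφ_def, hψ_def, ha_def, hb_def, h1, norm_neg]
      have key₂ : (∫ y, ψ y * a y ∂volume) = c (d₂ • e) := by
        rw [hcd₂]
        have h0 := integral_sub_left_eq_self
          (fun y : EuclideanSpace ℝ (Fin k) => g₁ ‖y‖ * g₂ ‖d₂ • e - y‖) volume (s • e)
        rw [← h0]
        congr 1; ext y
        have h1 : d₂ • e - (s • e - y) = -(d₁ • e - y) := by
          rw [hs]; module
        simp only [hφ_def, hψ_def, ha_def, hb_def, h1, norm_neg]
      -- pointwise rearrangement inequality
      have expand : ∀ d : ℝ, ∀ y : EuclideanSpace ℝ (Fin k), ‖d • e - y‖ ^ 2 = d ^ 2 - 2 * d * ⟪e, y⟫ + ‖y‖ ^ 2 := by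
        intro d y
        rw [norm_sub_sq_real, real_inner_smul_left, norm_smul, he, mul_one,
          Real.norm_eq_abs, sq_abs]
        ring
      have normle : ∀ u v : EuclideanSpace ℝ (Fin k), ‖u‖ ^ 2 ≤ ‖v‖ ^ 2 → ‖u‖ ≤ ‖v‖ := by
        intro u v h
        nlinarith [norm_nonneg u, norm_nonneg v]
      have ptwise : ∀ y : EuclideanSpace ℝ (Fin k), φ y * b y + ψ y * a y ≤ φ y * a y + ψ y * b y := by
        intro y
        rcases le_total (2 * ⟪e, y⟫) s with hts | hts
        · have hφψ : ψ y ≤ φ y := by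
            refine h₁mono (Set.mem_Ici.2 (norm_nonneg y)) (Set.mem_Ici.2 (norm_nonneg _)) ?_
            refine normle _ _ ?_
            rw [expand s y]
            nlinarith [hs0.le]
          have hab : b y ≤ a y := by
            refine h₂mono (Set.mem_Ici.2 (norm_nonneg _)) (Set.mem_Ici.2 (norm_nonneg _)) ?_
            refine normle _ _ ?_
            rw [expand d₁ y, expand d₂ y]
            nlinarith [hlt.le]
          nlinarith [mul_nonneg (sub_nonneg.2 hφψ) (sub_nonneg.2 hab)]
        · have hφψ : φ y ≤ ψ y := by
            refine h₁mono (Set.mem_Ici.2 (norm_nonneg _)) (Set.mem_Ici.2 (norm_nonneg y)) ?_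
            refine normle _ _ ?_
            rw [expand s y]
            nlinarith [hs0.le]
          have hab : a y ≤ b y := by
            refine h₂mono (Set.mem_Ici.2 (norm_nonneg _)) (Set.mem_Ici.2 (norm_nonneg _)) ?_
            refine normle _ _ ?_
            rw [expand d₁ y, expand d₂ y]
            nlinarith [hlt.le]
          nlinarith [mul_nonneg (sub_nonneg.2 hφψ) (sub_nonneg.2 hab)]
      have sum_le : c (d₂ • e) + c (d₂ • e) ≤ c (d₁ • e) + c (d₁ • e) := by
        calc c (d₂ • e) + c (d₂ • e)
            = (∫ y, φ y * b y ∂volume) + ∫ y, ψ y * a y ∂volume := by rw [hcd₂, key₂]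
          _ = ∫ y, (φ y * b y + ψ y * a y) ∂volume := (integral_add iφb iψa).symm
          _ ≤ ∫ y, (φ y * a y + ψ y * b y) ∂volume :=
              integral_mono (iφb.add iψa) (iφa.add iψb) ptwise
          _ = (∫ y, φ y * a y ∂volume) + ∫ y, ψ y * b y ∂volume := integral_add iφa iψb
          _ = c (d₁ • e) + c (d₁ • e) := by rw [hcd₁, key₁]
      linarith
    · -- radial
      simp only
      refine conv_rot g₁ g₂ ?_
      rw [norm_smul, he, mul_one, Real.norm_eq_abs, abs_of_nonneg (norm_nonneg x)]
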